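/- Let δ > 1, let (M, θ) define an Ising model on n vertices, and let v ≠ u be two of its vertices. Define an Ising model (M', θ') on n+1 vertices (the new vertex denoted v*) as follows: θ'_v = θ_v + δ, θ'_u = θ_u + δ, θ'_{v*} = 2δ, and θ'_w = θ_w for all other w; M'_{v,u} = M_{v,u} − δ, M'_{v,v*} = M'_{u,v*} = −2δ, M'_{w,v*} = 0 for w ∉ {v,u}, and M'_{i,j} = M_{i,j} for all other pairs. Let X ∼ I_{(M,θ)} and X' ∼ I_{(M',θ')}. Then: (1) the total variation distance between the law of X and the law of the restriction of X' to the original n vertices is at most 5e^{−4δ}; and (2) P[X'_{v*} ≠ AND(X'_v, X'_u)] ≥ 1 − 5e^{−4δ}, where AND(a,b) = 1 if a = b = 1 and AND(a,b) = −1 otherwise. -/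

import Mathlib

open Finset Real
open scoped Classical

noncomputable section

/-- The real spin value (`±1`) of a Boolean configuration entry. -/
def spin (s : Bool) : ℝ := if s then 1 else -1

/-- The unnormalized Ising weight `exp(θ·x + ½ x·Mx)` of a configuration. -/
def isingWt {n : ℕ} (M : Matrix (Fin n) (Fin n) ℝ) (θ : Fin n → ℝ) (σ : Fin n → Bool) : ℝ :=
  Real.exp ((∑ i, θ i * spin (σ i)) + (1 / 2) * ∑ i, ∑ j, spin (σ i) * M i j * spin (σ j))

/-- The Ising probability of a single configuration. -/
def isingProb {n : ℕ} (M : Matrix (Fin n) (Fin n) ℝ) (θ : Fin n → ℝ) (σ : Fin n → Bool) : ℝ :=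
  isingWt M θ σ / ∑ τ : Fin n → Bool, isingWt M θ τ

/-- The Ising probability of an event `A`. -/
def isingPr {n : ℕ} (M : Matrix (Fin n) (Fin n) ℝ) (θ : Fin n → ℝ)
    (A : (Fin n → Bool) → Prop) : ℝ :=
  ∑ σ ∈ Finset.univ.filter (fun σ => A σ), isingProb M θ σ

/-- The Ising conditional probability `P[A | B]`. -/
def isingCond {n : ℕ} (M : Matrix (Fin n) (Fin n) ℝ) (θ : Fin n → ℝ)
    (A B : (Fin n → Bool) → Prop) : ℝ :=
  isingPr M θ (fun σ => A σ ∧ B σ) / isingPr M θ B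

/-- The edge weights of the Ising model `(M', θ')` obtained from `(M, θ)` by fusing a NAND gadget
`J_δ` onto the vertices `v, u` and a new vertex `v* = n` (the last vertex of `Fin (n+1)`):
the weight of `{v, u}` is decreased by `δ`, `v*` is joined to `v` and `u` by edges of weight
`-2δ`, and all other weights are unchanged. -/
def extM {n : ℕ} (M : Matrix (Fin n) (Fin n) ℝ) (v u : Fin n) (δ : ℝ) :
    Matrix (Fin (n + 1)) (Fin (n + 1)) ℝ := fun i j =>
  if hi : (i : ℕ) < n then
    if hj : (j : ℕ) < n then
      M ⟨i, hi⟩ ⟨j, hj⟩ +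
        (if ((⟨i, hi⟩ : Fin n) = v ∧ (⟨j, hj⟩ : Fin n) = u) ∨
            ((⟨i, hi⟩ : Fin n) = u ∧ (⟨j, hj⟩ : Fin n) = v) then -δ else 0)
    else if (⟨i, hi⟩ : Fin n) = v ∨ (⟨i, hi⟩ : Fin n) = u then -2 * δ else 0
  else
    if hj : (j : ℕ) < n then
      if (⟨j, hj⟩ : Fin n) = v ∨ (⟨j, hj⟩ : Fin n) = u then -2 * δ else 0
    else 0

/-- The biases of the fused model: those of `v` and `u` are increased by `δ`, the new vertex `v*`
has bias `2δ`, and all other biases are unchanged. -/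
def extθ {n : ℕ} (θ : Fin n → ℝ) (v u : Fin n) (δ : ℝ) : Fin (n + 1) → ℝ := fun i =>
  if hi : (i : ℕ) < n then
    θ ⟨i, hi⟩ + (if (⟨i, hi⟩ : Fin n) = v ∨ (⟨i, hi⟩ : Fin n) = u then δ else 0)
  else 2 * δ


namespace Stmt12Aux

variable {n : ℕ}

lemma sum_if_const {α : Type*} [Fintype α] (P : Prop) [Decidable P] (f : α → ℝ) :
    ∑ a : α, (if P then f a else 0) = if P then ∑ a : α, f a else 0 := by
  split <;> simp

def Efn (δ a b c : ℝ) : ℝ :=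
  δ*a + δ*b + 2*δ*c - δ*(a*b) - 2*δ*(c*a) - 2*δ*(c*b)

lemma extθ_cast (θ : Fin n → ℝ) (v u : Fin n) (δ : ℝ) (hvu : v ≠ u) (i : Fin n) :
    extθ θ v u δ i.castSucc = θ i + ((if i = v then δ else 0) + (if i = u then δ else 0)) := by
  simp only [extθ, Fin.coe_castSucc, i.isLt, dif_pos, Fin.eta]
  by_cases h1 : i = v <;> by_cases h2 : i = u <;> simp_all [Ne.symm hvu]

lemma extθ_last (θ : Fin n → ℝ) (v u : Fin n) (δ : ℝ) :
    extθ θ v u δ (Fin.last n) = 2*δ := by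
  simp [extθ]

lemma extM_cc (M : Matrix (Fin n) (Fin n) ℝ) (v u : Fin n) (δ : ℝ) (hvu : v ≠ u) (i j : Fin n) :
    extM M v u δ i.castSucc j.castSucc =
      M i j + ((if i = v then (if j = u then -δ else 0) else 0)
        + (if i = u then (if j = v then -δ else 0) else 0)) := by
  simp only [extM, Fin.coe_castSucc, i.isLt, j.isLt, dif_pos, Fin.eta]
  congr 1
  by_cases h1 : i = v <;> by_cases h2 : i = u <;> by_cases h3 : j = v <;> by_cases h4 : j = u <;>
    simp_all [Ne.symm hvu]

lemma extM_cl (M : Matrix (Fin n) (Fin n) ℝ) (v u : Fin n) (δ : ℝ) (hvu : v ≠ u) (i : Fin n) :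
    extM M v u δ i.castSucc (Fin.last n) =
      (if i = v then -2*δ else 0) + (if i = u then -2*δ else 0) := by
  simp only [extM, Fin.coe_castSucc, i.isLt, dif_pos, Fin.eta, Fin.val_last, lt_irrefl,
    dif_neg, not_lt.mpr (le_refl n)]
  by_cases h1 : i = v <;> by_cases h2 : i = u <;> simp_all [Ne.symm hvu]

lemma extM_lc (M : Matrix (Fin n) (Fin n) ℝ) (v u : Fin n) (δ : ℝ) (hvu : v ≠ u) (j : Fin n) :
    extM M v u δ (Fin.last n) j.castSucc =
      (if j = v then -2*δ else 0) + (if j = u then -2*δ else 0) := by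
  simp only [extM, Fin.coe_castSucc, j.isLt, dif_pos, Fin.eta, Fin.val_last, lt_irrefl,
    dif_neg, not_lt.mpr (le_refl n)]
  by_cases h1 : j = v <;> by_cases h2 : j = u <;> simp_all [Ne.symm hvu]

lemma extM_ll (M : Matrix (Fin n) (Fin n) ℝ) (v u : Fin n) (δ : ℝ) :
    extM M v u δ (Fin.last n) (Fin.last n) = 0 := by
  simp [extM]


lemma wt_snoc (M : Matrix (Fin n) (Fin n) ℝ) (θ : Fin n → ℝ)
    (v u : Fin n) (hvu : v ≠ u) (δ : ℝ) (x : Fin n → Bool) (s : Bool) :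
    isingWt (extM M v u δ) (extθ θ v u δ) (Fin.snoc x s) =
      isingWt M θ x * Real.exp (Efn δ (spin (x v)) (spin (x u)) (spin s)) := by
  unfold isingWt
  rw [← Real.exp_add]
  congr 1
  have hθ : (∑ i : Fin (n+1), extθ θ v u δ i * spin ((Fin.snoc x s : Fin (n+1) → Bool) i))
      = (∑ i, θ i * spin (x i)) + (δ * spin (x v) + δ * spin (x u) + 2*δ*spin s) := by
    rw [Fin.sum_univ_castSucc]
    simp only [Fin.snoc_castSucc, Fin.snoc_last, extθ_cast θ v u δ hvu, extθ_last]
    simp only [add_mul, ite_mul, zero_mul, Finset.sum_add_distrib,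
      Finset.sum_ite_eq', Finset.mem_univ, if_true]
    ring
  have hQ : (∑ i : Fin (n+1), ∑ j : Fin (n+1), spin ((Fin.snoc x s : Fin (n+1) → Bool) i) * extM M v u δ i j * spin ((Fin.snoc x s : Fin (n+1) → Bool) j))
      = (∑ i, ∑ j, spin (x i) * M i j * spin (x j))
        + (-2*δ*(spin (x v)*spin (x u)) - 4*δ*spin s*(spin (x v)+spin (x u))) := by
    simp only [Fin.sum_univ_castSucc, Fin.snoc_castSucc, Fin.snoc_last,
      extM_cc M v u δ hvu, extM_cl M v u δ hvu, extM_lc M v u δ hvu, extM_ll]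
    simp only [mul_add, add_mul, mul_ite, ite_mul, mul_zero, zero_mul,
      Finset.sum_add_distrib, Finset.sum_ite_eq', Finset.mem_univ, if_true]
    simp only [sum_if_const, Finset.sum_ite_eq', Finset.mem_univ, if_true]
    ring
  rw [hθ, hQ, Efn]
  ring


lemma Efn_good (δ : ℝ) (a b : Bool) : Efn δ (spin a) (spin b) (spin (!(a && b))) = 3*δ := by
  cases a <;> cases b <;> simp [Efn, spin] <;> ring

lemma Efn_bad {δ : ℝ} (hδ : 0 ≤ δ) (a b : Bool) : Efn δ (spin a) (spin b) (spin (a && b)) ≤ -δ := by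
  cases a <;> cases b <;> simp [Efn, spin] <;> nlinarith

def snocEquiv : ((Fin n → Bool) × Bool) ≃ (Fin (n+1) → Bool) where
  toFun p := Fin.snoc p.1 p.2
  invFun σ := (Fin.init σ, σ (Fin.last n))
  left_inv p := by simp [Fin.init_snoc, Fin.snoc_last]
  right_inv σ := Fin.snoc_init_self σ

lemma sum_snoc (f : (Fin (n+1) → Bool) → ℝ) :
    (∑ σ : Fin (n+1) → Bool, f σ) = ∑ x : Fin n → Bool, ∑ s : Bool, f (Fin.snoc x s) := by
  rw [← Equiv.sum_comp snocEquiv f, Fintype.sum_prod_type]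
  rfl

lemma marg (M : Matrix (Fin n) (Fin n) ℝ) (θ : Fin n → ℝ)
    (v u : Fin n) (hvu : v ≠ u) (δ : ℝ) (x : Fin n → Bool) :
    (∑ s : Bool, isingWt (extM M v u δ) (extθ θ v u δ) (Fin.snoc x s)) =
      isingWt M θ x * (Real.exp (3*δ)
        + Real.exp (Efn δ (spin (x v)) (spin (x u)) (spin (x v && x u)))) := by
  simp only [wt_snoc M θ v u hvu δ x]
  rw [Fintype.sum_bool]
  cases h : x v && x u
  · rw [show (true : Bool) = !(x v && x u) by rw [h]; rfl]
    rw [Efn_good]; ring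
  · rw [show (false : Bool) = !(x v && x u) by rw [h]; rfl]
    rw [Efn_good]; ring

end Stmt12Aux

open Stmt12Aux in
/-- Fusing a NAND gadget onto the vertices `v ≠ u` of an Ising model `(M, θ)`:
(1) the law of the restriction of `X'` to the original `n` vertices is within total variation
distance `5e^{-4δ}` of the law of `X`, and (2) `X'_{v*}` is the (±1-valued) NAND of `X'_v` and
`X'_u` with probability at least `1 - 5e^{-4δ}`. -/
theorem stmt12 {n : ℕ} (δ : ℝ) (hδ : 1 < δ)
    (M : Matrix (Fin n) (Fin n) ℝ) (θ : Fin n → ℝ)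
    (hsymm : M.IsSymm) (hdiag : ∀ i, M i i = 0)
    (v u : Fin n) (hvu : v ≠ u) :
    (1 / 2) * (∑ x : Fin n → Bool,
        |isingProb M θ x -
          ∑ s : Bool, isingProb (extM M v u δ) (extθ θ v u δ) (Fin.snoc x s)|)
      ≤ 5 * Real.exp (-4 * δ) ∧
    1 - 5 * Real.exp (-4 * δ) ≤
      isingPr (extM M v u δ) (extθ θ v u δ)
        (fun σ => σ (Fin.last n) ≠ (σ v.castSucc && σ u.castSucc)) := by
  have hδ0 : (0:ℝ) < δ := lt_trans one_pos hδ
  set W : (Fin n → Bool) → ℝ := isingWt M θ with hW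
  set Zn : ℝ := ∑ x : Fin n → Bool, W x with hZn
  set M' := extM M v u δ with hM'
  set θ' := extθ θ v u δ with hθ'
  set Z' : ℝ := ∑ τ : Fin (n+1) → Bool, isingWt M' θ' τ with hZ'
  set t : ℝ := Real.exp (-4*δ) with ht
  have ht0 : 0 < t := Real.exp_pos _
  set bd : (Fin n → Bool) → ℝ :=
    fun x => Real.exp (Efn δ (spin (x v)) (spin (x u)) (spin (x v && x u))) with hbd
  have hbd0 : ∀ x, 0 < bd x := fun x => Real.exp_pos _
  have hbdle : ∀ x, bd x ≤ Real.exp (-δ) :=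
    fun x => Real.exp_le_exp.2 (Efn_bad hδ0.le _ _)
  have hee : Real.exp (-δ) = Real.exp (3*δ) * t := by
    rw [ht, ← Real.exp_add]; ring_nf
  have hW0 : ∀ x, 0 < W x := fun x => Real.exp_pos _
  have hZn0 : 0 < Zn := Finset.sum_pos (fun x _ => hW0 x) Finset.univ_nonempty
  have hmarg : ∀ x, (∑ s : Bool, isingWt M' θ' (Fin.snoc x s))
      = W x * (Real.exp (3*δ) + bd x) := fun x => marg M θ v u hvu δ x
  have hZ'eq : Z' = ∑ x : Fin n → Bool, W x * (Real.exp (3*δ) + bd x) := by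
    rw [hZ', sum_snoc]
    exact Finset.sum_congr rfl (fun x _ => hmarg x)
  have hZl : Zn * Real.exp (3*δ) ≤ Z' := by
    rw [hZ'eq, hZn, Finset.sum_mul]
    exact Finset.sum_le_sum fun x _ => by nlinarith [hW0 x, hbd0 x]
  have hZ'0 : 0 < Z' := lt_of_lt_of_le (mul_pos hZn0 (Real.exp_pos _)) hZl
  have hZu' : Z' ≤ Zn * Real.exp (3*δ) + t * (Zn * Real.exp (3*δ)) := by
    have : Z' ≤ Zn * (Real.exp (3*δ) + Real.exp (-δ)) := by
      rw [hZ'eq, hZn, Finset.sum_mul]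
      exact Finset.sum_le_sum fun x _ => by nlinarith [hW0 x, hbdle x]
    calc Z' ≤ Zn * (Real.exp (3*δ) + Real.exp (-δ)) := this
      _ = Zn * Real.exp (3*δ) + t * (Zn * Real.exp (3*δ)) := by rw [hee]; ring
  have htZ : t * (Zn * Real.exp (3*δ)) ≤ t * Z' :=
    mul_le_mul_of_nonneg_left hZl ht0.le
  constructor
  · -- TV part
    have hterm : ∀ x : Fin n → Bool,
        |isingProb M θ x - ∑ s : Bool, isingProb M' θ' (Fin.snoc x s)| ≤ (W x / Zn) * t := by
      intro x
      have hq : (∑ s : Bool, isingProb M' θ' (Fin.snoc x s))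
          = W x * (Real.exp (3*δ) + bd x) / Z' := by
        simp only [isingProb]
        rw [← Finset.sum_div, ← hZ', hmarg x]
      have hp : isingProb M θ x = W x / Zn := by
        simp only [isingProb]
        rfl
      rw [hq, hp]
      set c : ℝ := Real.exp (3*δ) + bd x with hc
      have hZnc : Zn * c = Zn * Real.exp (3*δ) + Zn * bd x := by rw [hc]; ring
      have hbdZ : Zn * bd x ≤ t * (Zn * Real.exp (3*δ)) := by
        have := mul_le_mul_of_nonneg_left (hbdle x) hZn0.le
        calc Zn * bd x ≤ Zn * Real.exp (-δ) := this
          _ = t * (Zn * Real.exp (3*δ)) := by rw [hee]; ring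
      have habs : |Z' - Zn * c| ≤ t * Z' := by
        rw [abs_le]
        constructor
        · have h1 : 0 < Zn * bd x := mul_pos hZn0 (hbd0 x)
          nlinarith
        · nlinarith [mul_pos hZn0 (hbd0 x)]
      rw [div_sub_div _ _ (ne_of_gt hZn0) (ne_of_gt hZ'0), abs_div,
        abs_of_pos (mul_pos hZn0 hZ'0),
        show W x * Z' - Zn * (W x * c) = W x * (Z' - Zn * c) by ring,
        abs_mul, abs_of_pos (hW0 x), div_le_iff₀ (mul_pos hZn0 hZ'0)]
      calc W x * |Z' - Zn * c| ≤ W x * (t * Z') :=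
            mul_le_mul_of_nonneg_left habs (hW0 x).le
        _ = W x / Zn * t * (Zn * Z') := by field_simp
    have hsum : (∑ x : Fin n → Bool,
        |isingProb M θ x - ∑ s : Bool, isingProb M' θ' (Fin.snoc x s)|) ≤ t := by
      calc (∑ x : Fin n → Bool,
          |isingProb M θ x - ∑ s : Bool, isingProb M' θ' (Fin.snoc x s)|)
          ≤ ∑ x : Fin n → Bool, (W x / Zn) * t := Finset.sum_le_sum fun x _ => hterm x
        _ = t := by
            rw [← Finset.sum_mul, ← Finset.sum_div, ← hZn, div_self hZn0.ne', one_mul]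
    linarith
  · -- probability part
    have hnum : (∑ σ ∈ Finset.univ.filter
          (fun σ : Fin (n+1) → Bool => σ (Fin.last n) ≠ (σ v.castSucc && σ u.castSucc)),
          isingWt M' θ' σ) = Zn * Real.exp (3*δ) := by
      rw [Finset.sum_filter, sum_snoc, hZn, Finset.sum_mul]
      refine Finset.sum_congr rfl fun x _ => ?_
      simp only [Fin.snoc_last, Fin.snoc_castSucc]
      rw [Fintype.sum_bool]
      cases h : x v && x u
      · rw [if_pos (by simp [h]), if_neg (by simp), add_zero,
          hM', hθ', wt_snoc M θ v u hvu δ x true,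
          show (true : Bool) = !(x v && x u) by rw [h]; rfl, Efn_good]
      · rw [if_neg (by simp), if_pos (by simp [h]), zero_add,
          hM', hθ', wt_snoc M θ v u hvu δ x false,
          show (false : Bool) = !(x v && x u) by rw [h]; rfl, Efn_good]
    have hPr : isingPr M' θ'
        (fun σ => σ (Fin.last n) ≠ (σ v.castSucc && σ u.castSucc))
        = (Zn * Real.exp (3*δ)) / Z' := by
      unfold isingPr
      simp only [isingProb]
      rw [← Finset.sum_div, ← hZ']
      congr 1
    rw [hPr, le_div_iff₀ hZ'0]
    have h0 : 0 ≤ t * Z' := (mul_pos ht0 hZ'0).le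
    nlinarith
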